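/- K-Knuth equivalence is preserved by restriction to an interval: if words w1 and w2 are K-Knuth equivalent, and for an integer interval [a,b] we let w_i|_{[a,b]} denote the word obtained from w_i by deleting all letters not in [a,b], then w1|_{[a,b]} and w2|_{[a,b]} are K-Knuth equivalent. -/

import Mathlib

/-- One application, inside an arbitrary context, of a K-Knuth generating relation:
`xzy ≡ zxy` and `yxz ≡ yzx` for `x < y < z`, `x ≡ xx`, and `xyx ≡ yxy`. -/
inductive KKnuthRel : List ℕ+ → List ℕ+ → Prop
  | rel1 (u v : List ℕ+) (x y z : ℕ+) (h1 : x < y) (h2 : y < z) :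
      KKnuthRel (u ++ [x, z, y] ++ v) (u ++ [z, x, y] ++ v)
  | rel2 (u v : List ℕ+) (x y z : ℕ+) (h1 : x < y) (h2 : y < z) :
      KKnuthRel (u ++ [y, x, z] ++ v) (u ++ [y, z, x] ++ v)
  | rel3 (u v : List ℕ+) (x : ℕ+) :
      KKnuthRel (u ++ [x] ++ v) (u ++ [x, x] ++ v)
  | rel4 (u v : List ℕ+) (x y : ℕ+) :
      KKnuthRel (u ++ [x, y, x] ++ v) (u ++ [y, x, y] ++ v)

/-- K-Knuth equivalence of words: the equivalence closure of the generating moves. -/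
def KKnuth : List ℕ+ → List ℕ+ → Prop := Relation.EqvGen KKnuthRel

/-- The restriction of a word to the letters lying in the interval `[a, b]`. -/
def restrict (a b : ℕ+) (w : List ℕ+) : List ℕ+ :=
  w.filter fun x => decide (a ≤ x ∧ x ≤ b)

lemma kKnuthRel_restrict (a b : ℕ+) {w1 w2 : List ℕ+} (h : KKnuthRel w1 w2) :
    KKnuth (restrict a b w1) (restrict a b w2) := by
  cases h with
  | rel1 u v x y z h1 h2 =>
    by_cases hx : a ≤ x ∧ x ≤ b <;> by_cases hz : a ≤ z ∧ z ≤ b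
    · have hy : a ≤ y ∧ y ≤ b := ⟨le_trans hx.1 h1.le, le_trans h2.le hz.2⟩
      simp only [restrict, List.filter_append, List.filter_cons, List.filter_nil,
        hx, hy, hz, decide_eq_true_eq, if_pos]
      exact Relation.EqvGen.rel _ _ (KKnuthRel.rel1 _ _ x y z h1 h2)
    all_goals {
      by_cases hy : a ≤ y ∧ y ≤ b <;>
      · simp only [restrict, List.filter_append, List.filter_cons, List.filter_nil,
          hx, hy, hz, decide_eq_true_eq, if_pos, if_neg, not_false_iff, decide_true,
          decide_false, ite_true, ite_false]
        exact Relation.EqvGen.refl _ }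
  | rel2 u v x y z h1 h2 =>
    by_cases hx : a ≤ x ∧ x ≤ b <;> by_cases hz : a ≤ z ∧ z ≤ b
    · have hy : a ≤ y ∧ y ≤ b := ⟨le_trans hx.1 h1.le, le_trans h2.le hz.2⟩
      simp only [restrict, List.filter_append, List.filter_cons, List.filter_nil,
        hx, hy, hz, decide_eq_true_eq, if_pos]
      exact Relation.EqvGen.rel _ _ (KKnuthRel.rel2 _ _ x y z h1 h2)
    all_goals {
      by_cases hy : a ≤ y ∧ y ≤ b <;>
      · simp only [restrict, List.filter_append, List.filter_cons, List.filter_nil,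
          hx, hy, hz, decide_eq_true_eq, if_pos, if_neg, not_false_iff, decide_true,
          decide_false, ite_true, ite_false]
        exact Relation.EqvGen.refl _ }
  | rel3 u v x =>
    by_cases hx : a ≤ x ∧ x ≤ b
    · simp only [restrict, List.filter_append, List.filter_cons, List.filter_nil,
        hx, decide_eq_true_eq, if_pos]
      exact Relation.EqvGen.rel _ _ (KKnuthRel.rel3 _ _ x)
    · simp only [restrict, List.filter_append, List.filter_cons, List.filter_nil,
        hx, decide_eq_true_eq, if_neg, not_false_iff]
      exact Relation.EqvGen.refl _
  | rel4 u v x y =>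
    by_cases hx : a ≤ x ∧ x ≤ b <;> by_cases hy : a ≤ y ∧ y ≤ b <;>
      simp only [restrict, List.filter_append, List.filter_cons, List.filter_nil,
        hx, hy, decide_eq_true_eq, if_pos, if_neg, not_false_iff, decide_true,
        decide_false, ite_true, ite_false]
    · exact Relation.EqvGen.rel _ _ (KKnuthRel.rel4 _ _ x y)
    · exact Relation.EqvGen.symm _ _
        (Relation.EqvGen.rel _ _ (KKnuthRel.rel3 _ _ x))
    · exact Relation.EqvGen.rel _ _ (KKnuthRel.rel3 _ _ y)
    · exact Relation.EqvGen.refl _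

/-- K-Knuth equivalence is preserved by restriction to an integer interval. -/
theorem kKnuth_restrict (a b : ℕ+) (w1 w2 : List ℕ+) (h : KKnuth w1 w2) :
    KKnuth (restrict a b w1) (restrict a b w2) := by
  induction h with
  | rel _ _ h => exact kKnuthRel_restrict a b h
  | refl _ => exact Relation.EqvGen.refl _
  | symm _ _ _ ih => exact Relation.EqvGen.symm _ _ ih
  | trans _ _ _ _ _ ih1 ih2 => exact Relation.EqvGen.trans _ _ _ ih1 ih2
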